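/- The average value ζ̃, defined by ζ̃_i(v) = v({i}) + Δ/n, is the unique function f from the class of 1-convex-extendable minimal incomplete games on N to ℝ^n satisfying, for all such games v, w: (1) efficiency: Σ_{i∈N} f_i(v) = v(N); (2) elementary symmetry: for all i ≠ j, v({i}) = v({j}) implies f_i(v) = f_j(v); (3) elementary additivity: f(v + w) = f(v) + f(w), where v + w is the minimal incomplete game with pointwise-summed values; (4) zero-excess axiom: if Δ_v = 0 then f_i(v) = v({i}) for all i ∈ N; (5) individual rationality: f_i(v) ≥ v({i}) for all i ∈ N. -/

import Mathlib

noncomputable section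

open Finset

/-- The upper (utopia) vector `b^w` of a cooperative game `w` on `N = {1,…,n}`. -/
def bvec (n : ℕ) (w : Finset (Fin n) → ℝ) (i : Fin n) : ℝ :=
  w Finset.univ - w (Finset.univ \ {i})

/-- A cooperative game `w` is 1-convex: for every nonempty coalition `S`,
`w S ≤ w N - b^w(N \ S)`, and `b^w(N) ≥ w N`. -/
def OneConvex (n : ℕ) (w : Finset (Fin n) → ℝ) : Prop :=
  (∀ S : Finset (Fin n), S.Nonempty →
      w S ≤ w Finset.univ - ∑ i ∈ Finset.univ \ S, bvec n w i) ∧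
  w Finset.univ ≤ ∑ i : Fin n, bvec n w i

/-- The set of 1-convex extensions of an incomplete game `(N, K, v)`:
cooperative games (`w ∅ = 0`) that are 1-convex and agree with `v` on `K`. -/
def Cext (n : ℕ) (K : Finset (Finset (Fin n))) (v : Finset (Fin n) → ℝ) :
    Set (Finset (Fin n) → ℝ) :=
  {w | w ∅ = 0 ∧ OneConvex n w ∧ ∀ S ∈ K, w S = v S}

/-- `K_min`: the empty coalition, the grand coalition and all singletons. -/
def KminF (n : ℕ) : Finset (Finset (Fin n)) :=
  {∅, Finset.univ} ∪ Finset.univ.image (fun i => ({i} : Finset (Fin n)))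

/-- The total excess `Δ = v(N) - ∑_{i ∈ N} v({i})`. -/
def totalExcess (n : ℕ) (v : Finset (Fin n) → ℝ) : ℝ :=
  v Finset.univ - ∑ i : Fin n, v {i}

/-- A minimal incomplete game (only the values on `K_min` are relevant) that is
1-convex-extendable, i.e. `v ∅ = 0` and `Δ ≥ 0`. -/
def MinExtendable (n : ℕ) (v : Finset (Fin n) → ℝ) : Prop :=
  v ∅ = 0 ∧ 0 ≤ totalExcess n v

/-- The extreme games `v^i` of the set of 1-convex extensions of a minimal
incomplete game. -/
def extGame (n : ℕ) (v : Finset (Fin n) → ℝ) (i : Fin n) (S : Finset (Fin n)) : ℝ :=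
  if S ∈ KminF n then v S
  else if i ∈ S then v Finset.univ - ∑ j ∈ Finset.univ \ S, v {j}
  else v Finset.univ - ∑ j ∈ Finset.univ \ S, v {j} - totalExcess n v

/-- The upper game of the set of 1-convex extensions of a minimal incomplete game. -/
def upperGameMin (n : ℕ) (v : Finset (Fin n) → ℝ) (S : Finset (Fin n)) : ℝ :=
  if S ∈ KminF n then v S else v Finset.univ - ∑ i ∈ Finset.univ \ S, v {i}

/-- The index set `E = 2^N \ ({∅, N} ∪ {{i}} ∪ {N \ {i}})` of extreme rays. -/
def ESetMin (n : ℕ) : Finset (Finset (Fin n)) :=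
  Finset.univ \
    (KminF n ∪ Finset.univ.image (fun i => Finset.univ \ ({i} : Finset (Fin n))))

/-- The extreme-ray game `e_T`: value `-1` on `T` and `0` elsewhere. -/
def eRay (n : ℕ) (T S : Finset (Fin n)) : ℝ := if S = T then -1 else 0

/-- The centre of gravity `ṽ = (1/n) ∑_i v^i` of the extreme games. -/
def tildeV (n : ℕ) (v : Finset (Fin n) → ℝ) (S : Finset (Fin n)) : ℝ :=
  (∑ i : Fin n, extGame n v i S) / (n : ℝ)

/-- The centre of gravity `ẽ = (1/|E|) ∑_{T ∈ E} e_T` of the extreme rays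
(minimal incomplete case). -/
def tildeEMin (n : ℕ) (S : Finset (Fin n)) : ℝ :=
  (∑ T ∈ ESetMin n, eRay n T S) / ((ESetMin n).card : ℝ)

/-- The gap function `g^w(S) = b^w(S) - w(S)`. -/
def gapF (n : ℕ) (w : Finset (Fin n) → ℝ) (S : Finset (Fin n)) : ℝ :=
  (∑ i ∈ S, bvec n w i) - w S

/-- The τ-value of a 1-convex game: `τ_i(w) = b^w_i - g^w(N)/n`. -/
def tauVal (n : ℕ) (w : Finset (Fin n) → ℝ) (i : Fin n) : ℝ :=
  bvec n w i - gapF n w Finset.univ / (n : ℝ)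

/-- The Shapley value. -/
def shapley (n : ℕ) (w : Finset (Fin n) → ℝ) (i : Fin n) : ℝ :=
  ∑ S ∈ Finset.univ.filter (fun S : Finset (Fin n) => i ∈ S),
    ((Nat.factorial (S.card - 1) * Nat.factorial (n - S.card) : ℕ) : ℝ) /
        (Nat.factorial n : ℝ) * (w S - w (S \ {i}))

/-- The concession vector `λ^w_i = min_{S ∋ i} g^w(S)`. -/
def concession (n : ℕ) (w : Finset (Fin n) → ℝ) (i : Fin n) : ℝ :=
  (Finset.univ.filter (fun S : Finset (Fin n) => i ∈ S)).inf'
    ⟨{i}, by simp⟩ (gapF n w)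

/-- The minimal right vector `a^w = b^w - λ^w`. -/
def minRight (n : ℕ) (w : Finset (Fin n) → ℝ) (i : Fin n) : ℝ :=
  bvec n w i - concession n w i

/-- The average value `ζ̃_i(v) = v({i}) + Δ/n` of a minimal incomplete game. -/
def avgValue (n : ℕ) (v : Finset (Fin n) → ℝ) (i : Fin n) : ℝ :=
  v {i} + totalExcess n v / (n : ℝ)

/-- The zero-normalised game of a minimal incomplete game: value `Δ` on the
grand coalition and `0` on all other coalitions. -/
def zeroNorm (n : ℕ) (v : Finset (Fin n) → ℝ) (S : Finset (Fin n)) : ℝ :=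
  if S = Finset.univ then totalExcess n v else 0

/-- The upper game `v̄` for incomplete games with defined upper vector. -/
def upperGameK (n : ℕ) (K : Finset (Finset (Fin n))) (v : Finset (Fin n) → ℝ)
    (S : Finset (Fin n)) : ℝ :=
  if S ∈ K then v S else v Finset.univ - ∑ i ∈ Finset.univ \ S, bvec n v i

/-- The centre of gravity `ẽ = (1/|E|) ∑_{T ∉ K} e_T` of the extreme rays
(defined upper vector case), where `E = 2^N \ K`. -/
def tildeEK (n : ℕ) (K : Finset (Finset (Fin n))) (S : Finset (Fin n)) : ℝ :=
  (∑ T ∈ Finset.univ \ K, eRay n T S) / (((Finset.univ \ K).card : ℝ))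

/-- The axioms of Theorem `thm:ave-value-axiom2`: efficiency, elementary
symmetry, elementary additivity, zero-excess axiom, and individual rationality. -/
def AvAxioms2 (n : ℕ) (f : (Finset (Fin n) → ℝ) → Fin n → ℝ) : Prop :=
  (∀ v, MinExtendable n v → ∑ i : Fin n, f v i = v Finset.univ) ∧
  (∀ v, MinExtendable n v → ∀ i j : Fin n, i ≠ j → v {i} = v {j} →
    f v i = f v j) ∧
  (∀ v w, MinExtendable n v → MinExtendable n w → f (v + w) = f v + f w) ∧
  (∀ v, MinExtendable n v → totalExcess n v = 0 → ∀ i : Fin n, f v i = v {i}) ∧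
  (∀ v, MinExtendable n v → ∀ i : Fin n, v {i} ≤ f v i)

/-- the average value `ζ̃_i(v) = v({i}) + Δ/n` is the unique value
on 1-convex-extendable minimal incomplete games satisfying efficiency,
elementary symmetry, elementary additivity, the zero-excess axiom and
individual rationality. -/
theorem stmt_12 (n : ℕ) (hn : 0 < n) :
    AvAxioms2 n (avgValue n) ∧
    ∀ f : (Finset (Fin n) → ℝ) → Fin n → ℝ, AvAxioms2 n f →
      ∀ v, MinExtendable n v → ∀ i : Fin n, f v i = avgValue n v i := by
  have hn' : (n : ℝ) ≠ 0 := Nat.cast_ne_zero.2 hn.ne'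
  have hsingdeg : ∀ (v : Finset (Fin n) → ℝ) (i : Fin n),
      ({i} : Finset (Fin n)) = Finset.univ → totalExcess n v = 0 := by
    intro v i h
    have hsum : ∑ j : Fin n, v {j} = v Finset.univ := by
      rw [← h]; simp
    simp [totalExcess, hsum]
  constructor
  · refine ⟨?_, ?_, ?_, ?_, ?_⟩
    · intro v hv
      simp only [avgValue, Finset.sum_add_distrib, Finset.sum_const, card_univ,
        Fintype.card_fin, nsmul_eq_mul]
      rw [mul_div_cancel₀ _ hn']
      simp [totalExcess]
    · intro v hv i j hij h
      simp [avgValue, h]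
    · intro v w hv hw
      funext i
      simp only [avgValue, Pi.add_apply, totalExcess, Finset.sum_add_distrib]
      ring
    · intro v hv h0 i
      simp [avgValue, h0]
    · intro v hv i
      have : 0 ≤ totalExcess n v / (n : ℝ) :=
        div_nonneg hv.2 (Nat.cast_nonneg n)
      simp only [avgValue]; linarith
  · rintro f ⟨heff, hsym, hadd, hzero, hir⟩ v hv i
    set z : Finset (Fin n) → ℝ := zeroNorm n v with hz_def
    set u : Finset (Fin n) → ℝ := fun S => v S - z S with hu_def
    have huniv_ne : (∅ : Finset (Fin n)) ≠ Finset.univ := by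
      intro h
      exact absurd (h ▸ Finset.mem_univ (⟨0, hn⟩ : Fin n)) (by simp)
    have hzsing : ∀ j : Fin n, z {j} = 0 := by
      intro j
      by_cases h : ({j} : Finset (Fin n)) = Finset.univ
      · simp [hz_def, zeroNorm, h, hsingdeg v j h]
      · simp [hz_def, zeroNorm, h]
    have hzuniv : z Finset.univ = totalExcess n v := by simp [hz_def, zeroNorm]
    have hzempty : z ∅ = 0 := by simp [hz_def, zeroNorm, huniv_ne]
    have husing : ∀ j : Fin n, u {j} = v {j} := by
      intro j; simp [hu_def, hzsing j]
    have hu : MinExtendable n u := by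
      constructor
      · simp [hu_def, hv.1, hzempty]
      · have : totalExcess n u = 0 := by
          simp only [totalExcess, hu_def]
          simp only [Finset.sum_sub_distrib]
          rw [hzuniv]
          have : ∑ j : Fin n, z {j} = 0 := Finset.sum_eq_zero fun j _ => hzsing j
          rw [this]
          simp [totalExcess]
        rw [this]
    have huex : totalExcess n u = 0 := le_antisymm (by
        have := hu.2
        simp only [totalExcess, hu_def] at *
        simp only [Finset.sum_sub_distrib] at *
        rw [hzuniv] at *
        have hzz : ∑ j : Fin n, z {j} = 0 := Finset.sum_eq_zero fun j _ => hzsing j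
        rw [hzz] at *
        simp [totalExcess]) hu.2
    have hz : MinExtendable n z := by
      constructor
      · exact hzempty
      · have : totalExcess n z = totalExcess n v := by
          simp only [totalExcess, hzuniv]
          have : ∑ j : Fin n, z {j} = 0 := Finset.sum_eq_zero fun j _ => hzsing j
          rw [this]; ring
        rw [this]; exact hv.2
    have hsplit : u + z = v := by
      funext S; simp [hu_def]
    have hfv : f v i = f u i + f z i := by
      rw [← hsplit, hadd u z hu hz]; rfl
    have hfu : f u i = v {i} := by
      rw [hzero u hu huex i, husing]
    have hconst : ∀ j : Fin n, f z j = f z i := by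
      intro j
      by_cases h : j = i
      · rw [h]
      · exact hsym z hz j i h (by rw [hzsing, hzsing])
    have hsumz : ∑ j : Fin n, f z j = totalExcess n v := by
      rw [heff z hz, hzuniv]
    have hnfz : (n : ℝ) * f z i = totalExcess n v := by
      rw [← hsumz]
      rw [Finset.sum_congr rfl fun j _ => hconst j]
      simp [mul_comm]
    have hfz : f z i = totalExcess n v / (n : ℝ) := by
      field_simp [← hnfz]
      linear_combination hnfz
    rw [hfv, hfu, hfz, avgValue]
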